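/- Two trees with ω levels, all levels finite, are locally isomorphic (for every n, the unions of their first n levels are order-isomorphic) if and only if they are elementarily equivalent as structures in the language of one binary relation (the order). -/

import Mathlib

/-- A well-founded tree order of height at most ω: a partial order with a least
element (root) in which the set of predecessors of every element is finite and
linearly ordered. -/
structure TreeOrder (T : Type*) where
  le : T → T → Prop
  refl : ∀ x, le x x
  antisymm : ∀ x y, le x y → le y x → x = y
  trans : ∀ x y z, le x y → le y z → le x z
  root : T
  root_le : ∀ x, le root x
  pred_finite : ∀ x, {y | le y x}.Finite
  pred_chain : ∀ x y z, le y x → le z x → le y z ∨ le z y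

namespace TreeOrder

variable {T : Type*} (t : TreeOrder T)

/-- The strict order associated to a tree order. -/
def lt (x y : T) : Prop := t.le x y ∧ x ≠ y

/-- The `n`-th level: elements with exactly `n` strict predecessors. -/
def level (n : ℕ) : Set T := {x | {y | t.lt y x}.ncard = n}

/-- The tree has ω levels: every level is nonempty. -/
def OmegaLevels : Prop := ∀ n, (t.level n).Nonempty

/-- All levels are finite. -/
def FiniteLevels : Prop := ∀ n, (t.level n).Finite

/-- No leaves: every element has a strict successor. -/
def NoLeaves : Prop := ∀ x, ∃ y, t.lt x y

/-- `y` is an immediate successor of `x`. -/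
def ImmSucc (x y : T) : Prop := t.lt x y ∧ ¬ ∃ z, t.lt x z ∧ t.lt z y

/-- Union of the first `n` levels. -/
def below (n : ℕ) : Set T := {x | ∃ k < n, x ∈ t.level k}

end TreeOrder
namespace TreeOrder
variable {T : Type*} (t : TreeOrder T)

lemma lt_of_le_of_lt' {x y z : T} (h1 : t.le x y) (h2 : t.lt y z) : t.lt x z := by
  refine ⟨t.trans _ _ _ h1 h2.1, fun he => h2.2 ?_⟩
  subst he
  exact t.antisymm _ _ h2.1 h1

lemma lt_of_lt_of_le' {x y z : T} (h1 : t.lt x y) (h2 : t.le y z) : t.lt x z := by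
  refine ⟨t.trans _ _ _ h1.1 h2, fun he => ?_⟩
  subst he
  exact h1.2 (t.antisymm _ _ h1.1 h2)

lemma preds_finite (x : T) : {y | t.lt y x}.Finite :=
  (t.pred_finite x).subset fun _ h => h.1

/-- the level of an element -/
noncomputable def lev (x : T) : ℕ := {y | t.lt y x}.ncard

lemma lev_lt_lev {x y : T} (h : t.lt y x) : t.lev y < t.lev x := by
  apply Set.ncard_lt_ncard _ (t.preds_finite x)
  constructor
  · exact fun z hz => t.lt_of_lt_of_le' hz h.1
  · intro hsub
    exact (hsub (Set.mem_setOf.2 h)).2 rfl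

lemma mem_below_iff {x : T} {n : ℕ} : x ∈ t.below n ↔ t.lev x < n := by
  constructor
  · rintro ⟨k, hk, hx⟩
    simpa [lev, Set.mem_setOf_eq ▸ hx] using (hx : _ = k) ▸ hk
  · intro h
    exact ⟨t.lev x, h, rfl⟩

lemma below_mono {m n : ℕ} (h : m ≤ n) : t.below m ⊆ t.below n := fun x hx =>
  t.mem_below_iff.2 (lt_of_lt_of_le (t.mem_below_iff.1 hx) h)

lemma below_finite (hf : t.FiniteLevels) (n : ℕ) : (t.below n).Finite := by
  have : t.below n ⊆ ⋃ k ∈ Set.Iio n, t.level k := by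
    rintro x ⟨k, hk, hx⟩
    exact Set.mem_biUnion hk hx
  exact ((Set.finite_Iio n).biUnion fun k _ => hf k).subset this

lemma preds_subset_below {x : T} {n : ℕ} (hx : x ∈ t.below n) :
    {y | t.lt y x} ⊆ t.below n := fun y hy =>
  t.mem_below_iff.2 (lt_trans (t.lev_lt_lev hy) (t.mem_below_iff.1 hx))

lemma mem_below_lev_succ (x : T) : x ∈ t.below (t.lev x + 1) :=
  t.mem_below_iff.2 (Nat.lt_succ_self _)

end TreeOrder
namespace TreeOrder
variable {T₁ T₂ : Type*} (t1 : TreeOrder T₁) (t2 : TreeOrder T₂)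

lemma image_preds {f : T₁ → T₂} {n : ℕ} (hb : Set.BijOn f (t1.below n) (t2.below n))
    (hiff : ∀ x ∈ t1.below n, ∀ y ∈ t1.below n, (t1.le x y ↔ t2.le (f x) (f y)))
    {x : T₁} (hx : x ∈ t1.below n) :
    f '' {y | t1.lt y x} = {z | t2.lt z (f x)} := by
  ext z
  constructor
  · rintro ⟨y, hy, rfl⟩
    have hyb : y ∈ t1.below n := t1.preds_subset_below hx hy
    exact ⟨(hiff y hyb x hx).1 hy.1, fun he => hy.2 (hb.injOn hyb hx he)⟩
  · intro hz
    have hzb : z ∈ t2.below n := t2.preds_subset_below (hb.mapsTo hx) hz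
    obtain ⟨y, hyb, rfl⟩ := hb.surjOn hzb
    exact ⟨y, ⟨(hiff y hyb x hx).2 hz.1, fun he => hz.2 (congrArg f he)⟩, rfl⟩

lemma lev_map {f : T₁ → T₂} {n : ℕ} (hb : Set.BijOn f (t1.below n) (t2.below n))
    (hiff : ∀ x ∈ t1.below n, ∀ y ∈ t1.below n, (t1.le x y ↔ t2.le (f x) (f y)))
    {x : T₁} (hx : x ∈ t1.below n) : t2.lev (f x) = t1.lev x := by
  rw [lev, lev, ← image_preds t1 t2 hb hiff hx,
    Set.ncard_image_of_injOn (hb.injOn.mono (t1.preds_subset_below hx))]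

lemma map_below {f : T₁ → T₂} {n : ℕ} (hb : Set.BijOn f (t1.below n) (t2.below n))
    (hiff : ∀ x ∈ t1.below n, ∀ y ∈ t1.below n, (t1.le x y ↔ t2.le (f x) (f y)))
    {m : ℕ} (hm : m ≤ n) : Set.BijOn f (t1.below m) (t2.below m) := by
  refine ⟨fun x hx => ?_, hb.injOn.mono (t1.below_mono hm), fun z hz => ?_⟩
  · exact t2.mem_below_iff.2 ((lev_map t1 t2 hb hiff (t1.below_mono hm hx)) ▸
      t1.mem_below_iff.1 hx)
  · obtain ⟨y, hyb, rfl⟩ := hb.surjOn (t2.below_mono hm hz)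
    exact ⟨y, t1.mem_below_iff.2 ((lev_map t1 t2 hb hiff hyb) ▸ t2.mem_below_iff.1 hz), rfl⟩

end TreeOrder
open CategoryTheory Opposite in
lemma TreeOrder.exists_global_iso {T₁ T₂ : Type*} (t1 : TreeOrder T₁) (t2 : TreeOrder T₂)
    (hf1 : t1.FiniteLevels) (hf2 : t2.FiniteLevels)
    (hloc : ∀ n, ∃ f : T₁ → T₂, Set.BijOn f (t1.below n) (t2.below n) ∧
      ∀ x ∈ t1.below n, ∀ y ∈ t1.below n, (t1.le x y ↔ t2.le (f x) (f y))) :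
    ∃ g : T₁ → T₂, Function.Bijective g ∧ ∀ x y, t1.le x y ↔ t2.le (g x) (g y) := by
  classical
  let P₀ : ℕ → (T₁ → T₂) → Prop := fun n f =>
    Set.BijOn f (t1.below n) (t2.below n) ∧
      (∀ x ∈ t1.below n, ∀ y ∈ t1.below n, (t1.le x y ↔ t2.le (f x) (f y)))
  let P : ℕ → (T₁ → T₂) → Prop := fun n f =>
    P₀ n f ∧ ∀ x, x ∉ t1.below n → f x = t2.root
  let res : ∀ (m : ℕ) (f : T₁ → T₂), T₁ → T₂ := fun m f x =>
    if x ∈ t1.below m then f x else t2.root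
  have hres : ∀ {m n : ℕ}, m ≤ n → ∀ {f}, P₀ n f → P m (res m f) := by
    intro m n hmn f hf
    have heq : Set.EqOn f (res m f) (t1.below m) := fun x hx => by
      simp only [res, if_pos hx]
    refine ⟨⟨((map_below t1 t2 hf.1 hf.2 hmn).congr heq), fun x hx y hy => ?_⟩,
      fun x hx => if_neg hx⟩
    rw [← heq hx, ← heq hy]
    exact hf.2 x (t1.below_mono hmn hx) y (t1.below_mono hmn hy)
  have hresid : ∀ {n : ℕ} {f}, P n f → res n f = f := by
    intro n f hf
    funext x
    by_cases hx : x ∈ t1.below n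
    · exact if_pos hx
    · simp only [res, if_neg hx, hf.2 x hx]
  have hresres : ∀ {k m : ℕ}, k ≤ m → ∀ (f : T₁ → T₂),
      res k (res m f) = res k f := by
    intro k m hkm f
    funext x
    by_cases hx : x ∈ t1.below k
    · simp only [res, if_pos hx, if_pos (t1.below_mono hkm hx)]
    · simp only [res, if_neg hx]
  let F : ℕᵒᵖ ⥤ Type _ :=
    { obj := fun n => {f : T₁ → T₂ // P n.unop f}
      map := fun {n m} h => TypeCat.ofHom fun f => ⟨res m.unop f.1, hres (leOfHom h.unop) f.2.1⟩
      map_id := fun n => by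
        ext f
        exact congrFun (hresid f.2) _
      map_comp := fun {n m k} h h' => by
        ext f
        exact congrFun ((hresres (leOfHom h'.unop) f.1)).symm _ }
  haveI hne : ∀ n : ℕᵒᵖ, Nonempty (F.obj n) := by
    intro n
    obtain ⟨f, hb, hiff⟩ := hloc n.unop
    exact ⟨res n.unop f, hres le_rfl ⟨hb, hiff⟩⟩
  haveI hfin : ∀ n : ℕᵒᵖ, Finite (F.obj n) := by
    intro n
    haveI := (t1.below_finite hf1 n.unop).to_subtype
    haveI := (t2.below_finite hf2 n.unop).to_subtype
    let G : F.obj n → (↥(t1.below n.unop) → ↥(t2.below n.unop)) := fun f x =>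
      ⟨f.1 x.1, f.2.1.1.mapsTo x.2⟩
    refine Finite.of_injective G fun f f' hff' => Subtype.ext (funext fun x => ?_)
    by_cases hx : x ∈ t1.below n.unop
    · exact congrArg Subtype.val (congrFun hff' ⟨x, hx⟩)
    · rw [f.2.2 x hx, f'.2.2 x hx]
  obtain ⟨u, hu⟩ := nonempty_sections_of_finite_inverse_system F
  let g : T₁ → T₂ := fun x => (u (op (t1.lev x + 1))).1 x
  have key : ∀ (n : ℕ) (x : T₁), x ∈ t1.below n → (u (op n)).1 x = g x := by
    intro n x hx
    have hle : t1.lev x + 1 ≤ n := t1.mem_below_iff.1 hx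
    have := hu ((homOfLE hle).op : op n ⟶ op (t1.lev x + 1))
    have h2 := congrArg Subtype.val this
    have h3 := congrFun h2 x
    simp only [F, res, TypeCat.ofHom_apply] at h3
    rw [if_pos (t1.mem_below_lev_succ x)] at h3
    exact h3
  refine ⟨g, ⟨fun x y hxy => ?_, fun z => ?_⟩, fun x y => ?_⟩
  · set n := max (t1.lev x + 1) (t1.lev y + 1) with hn
    have hx : x ∈ t1.below n := t1.mem_below_iff.2 (lt_of_lt_of_le (Nat.lt_succ_self _)
      (le_max_left _ _))
    have hy : y ∈ t1.below n := t1.mem_below_iff.2 (lt_of_lt_of_le (Nat.lt_succ_self _)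
      (le_max_right _ _))
    exact (u (op n)).2.1.1.injOn hx hy (by rw [key n x hx, key n y hy]; exact hxy)
  · set n := t2.lev z + 1
    obtain ⟨x, hx, hfx⟩ := (u (op n)).2.1.1.surjOn (t2.mem_below_lev_succ z)
    exact ⟨x, by rw [← key n x hx]; exact hfx⟩
  · set n := max (t1.lev x + 1) (t1.lev y + 1) with hn
    have hx : x ∈ t1.below n := t1.mem_below_iff.2 (lt_of_lt_of_le (Nat.lt_succ_self _)
      (le_max_left _ _))
    have hy : y ∈ t1.below n := t1.mem_below_iff.2 (lt_of_lt_of_le (Nat.lt_succ_self _)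
      (le_max_right _ _))
    rw [← key n x hx, ← key n y hy]
    exact (u (op n)).2.1.2 x hx y hy
open FirstOrder FirstOrder.Language in
lemma TreeOrder.ee_of_global_iso {T₁ T₂ : Type*} (t1 : TreeOrder T₁) (t2 : TreeOrder T₂)
    (g : T₁ → T₂) (hbij : Function.Bijective g)
    (hiff : ∀ x y, t1.le x y ↔ t2.le (g x) (g y)) :
    @ElementarilyEquivalent Language.order T₁ T₂
      (@Language.orderStructure T₁ ⟨t1.le⟩) (@Language.orderStructure T₂ ⟨t2.le⟩) := by
  letI : LE T₁ := ⟨t1.le⟩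
  letI : LE T₂ := ⟨t2.le⟩
  letI := Language.orderStructure T₁
  letI := Language.orderStructure T₂
  let E : T₁ ≃[Language.order] T₂ :=
    { toEquiv := Equiv.ofBijective g hbij
      map_fun' := fun {n} f _ => isEmptyElim f
      map_rel' := fun {n} r x => by
        cases r
        exact (hiff (x 0) (x 1)).symm }
  exact StrongHomClass.elementarilyEquivalent E
open FirstOrder FirstOrder.Language

section OldApi

variable {L : Language}

/-- conjunction over a finset -/
noncomputable def iInfOn {α β : Type*} {n : ℕ} (s : Finset β) (f : β → L.BoundedFormula α n) :
    L.BoundedFormula α n :=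
  BoundedFormula.iInf fun b : s => f b

/-- disjunction over a finset -/
noncomputable def iSupOn {α β : Type*} {n : ℕ} (s : Finset β) (f : β → L.BoundedFormula α n) :
    L.BoundedFormula α n :=
  BoundedFormula.iSup fun b : s => f b

/-- existential quantification with relabelling -/
noncomputable def iExsOld {α β γ : Type*} [Finite γ] (f : α → β ⊕ γ) (φ : L.Formula α) :
    L.Formula β :=
  Formula.iExs γ (φ.relabel f)

/-- universal quantification with relabelling -/
noncomputable def iAllsOld {α β γ : Type*} [Finite γ] (f : α → β ⊕ γ) (φ : L.Formula α) :
    L.Formula β :=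
  Formula.iAlls γ (φ.relabel f)

variable {M : Type*} [L.Structure M]

lemma realize_iInfOn {α β : Type*} {n : ℕ} (s : Finset β) (f : β → L.BoundedFormula α n)
    (v : α → M) (xs : Fin n → M) :
    (iInfOn s f).Realize v xs ↔ ∀ b ∈ s, (f b).Realize v xs := by
  simp [iInfOn, BoundedFormula.realize_iInf]

lemma realize_iSupOn {α β : Type*} {n : ℕ} (s : Finset β) (f : β → L.BoundedFormula α n)
    (v : α → M) (xs : Fin n → M) :
    (iSupOn s f).Realize v xs ↔ ∃ b ∈ s, (f b).Realize v xs := by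
  simp [iSupOn, BoundedFormula.realize_iSup]

lemma realize_iExsOld {α β γ : Type*} [Finite γ] {f : α → β ⊕ γ} {φ : L.Formula α}
    {v : β → M} : (iExsOld f φ).Realize v ↔ ∃ i : γ → M, φ.Realize (fun a => Sum.elim v i (f a)) := by
  rw [iExsOld, Formula.realize_iExs]
  exact exists_congr fun i => Formula.realize_relabel

lemma realize_iAllsOld {α β γ : Type*} [Finite γ] {f : α → β ⊕ γ} {φ : L.Formula α}
    {v : β → M} : (iAllsOld f φ).Realize v ↔ ∀ i : γ → M, φ.Realize (fun a => Sum.elim v i (f a)) := by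
  rw [iAllsOld, Formula.realize_iAlls]
  exact forall_congr' fun i => Formula.realize_relabel

end OldApi

section Formulas

variable {α : Type}

/-- Formula `a ≤ b` between variables. -/
noncomputable def vle (a b : α) : Language.order.Formula α :=
  Term.le (Term.var (Sum.inl a)) (Term.var (Sum.inl b))

/-- Formula `a = b` between variables. -/
noncomputable def veq (a b : α) : Language.order.Formula α :=
  Term.equal (Term.var a) (Term.var b)

/-- Formula `a < b` (le and not equal) between variables. -/
noncomputable def vlt (a b : α) : Language.order.Formula α :=
  vle a b ⊓ ∼(veq a b)

/-- Formula: the variable `a` has at least `N` strict predecessors. -/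
noncomputable def hasNPreds (N : ℕ) (a : α) : Language.order.Formula α :=
  iExsOld (fun x => x : α ⊕ Fin N → α ⊕ Fin N)
    ((iInfOn (Finset.univ.filter fun p : Fin N × Fin N => p.1 ≠ p.2)
        fun p => ∼(veq (Sum.inr p.1 : α ⊕ Fin N) (Sum.inr p.2))) ⊓
      iInfOn Finset.univ fun k : Fin N => vlt (Sum.inr k : α ⊕ Fin N) (Sum.inl a))

/-- Formula: the variable `a` has fewer than `N` strict predecessors. -/
noncomputable def smallLev (N : ℕ) (a : α) : Language.order.Formula α :=
  ∼(hasNPreds N a)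

variable {M : Type*} [LE M] [Language.order.Structure M] [Language.order.OrderedStructure M]

@[simp] lemma realize_vle (a b : α) (v : α → M) :
    (vle a b).Realize v ↔ v a ≤ v b := by
  simp [vle, Formula.Realize]

@[simp] lemma realize_veq (a b : α) (v : α → M) :
    (veq a b).Realize v ↔ v a = v b := by
  simp [veq]

@[simp] lemma realize_vlt (a b : α) (v : α → M) :
    (vlt a b).Realize v ↔ v a ≤ v b ∧ v a ≠ v b := by
  rw [vlt, Formula.realize_inf, Formula.realize_not, realize_vle, realize_veq]

lemma realize_hasNPreds (N : ℕ) (a : α) (v : α → M) :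
    (hasNPreds N a).Realize v ↔
      ∃ i : Fin N → M, Function.Injective i ∧ ∀ k, i k ≤ v a ∧ i k ≠ v a := by
  rw [hasNPreds, realize_iExsOld]
  refine exists_congr fun i => ?_
  rw [show (fun x => Sum.elim v i ((fun x => x) x)) = Sum.elim v i from rfl]
  rw [Formula.realize_inf]
  simp only [Formula.Realize, realize_iInfOn]
  constructor
  · rintro ⟨h1, h2⟩
    refine ⟨fun k l hkl => ?_, fun k => ?_⟩
    · by_contra hne
      have := h1 (k, l) (by simp [hne])
      rw [BoundedFormula.realize_not] at this
      exact this ((realize_veq (M := M) (Sum.inr k) (Sum.inr l) (Sum.elim v i)).2 hkl)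
    · exact (realize_vlt (M := M) (Sum.inr k) (Sum.inl a) (Sum.elim v i)).1
        (h2 k (Finset.mem_univ _))
  · rintro ⟨hinj, hlt⟩
    refine ⟨fun p hp => ?_, fun k _ => ?_⟩
    · rw [BoundedFormula.realize_not]
      intro hc
      have := (realize_veq (M := M) (Sum.inr p.1) (Sum.inr p.2) (Sum.elim v i)).1 hc
      simp only [Finset.mem_filter] at hp
      exact hp.2 (hinj this)
    · exact (realize_vlt (M := M) (Sum.inr k) (Sum.inl a) (Sum.elim v i)).2 (hlt k)

end Formulas

lemma exists_inj_iff_le_ncard {M : Type*} {S : Set M} (hS : S.Finite) (N : ℕ) :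
    (∃ i : Fin N → M, Function.Injective i ∧ ∀ k, i k ∈ S) ↔ N ≤ S.ncard := by
  constructor
  · rintro ⟨i, hinj, hmem⟩
    have h1 : Set.range i ⊆ S := by rintro _ ⟨k, rfl⟩; exact hmem k
    have h2 : (Set.range i).ncard = N := by
      rw [← Nat.card_coe_set_eq, Nat.card_range_of_injective hinj,
        Nat.card_eq_fintype_card, Fintype.card_fin]
    exact h2 ▸ Set.ncard_le_ncard h1 hS
  · intro hN
    obtain ⟨u, huS, hu⟩ := Set.exists_subset_card_eq hN
    have hufin : u.Finite := hS.subset huS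
    haveI := hufin.fintype
    have hcard : Fintype.card u = N := by
      rw [← Set.toFinset_card, ← Set.ncard_eq_toFinset_card', hu]
    let e := (Fintype.equivFinOfCardEq hcard).symm
    exact ⟨fun k => (e k : M), Subtype.coe_injective.comp e.injective,
      fun k => huS (e k).2⟩

lemma realize_smallLev_iff {M : Type*} (t : TreeOrder M) {α : Type} (N : ℕ) (a : α)
    (v : α → M) :
    (letI : LE M := ⟨t.le⟩
     letI := Language.orderStructure M
     (smallLev N a).Realize v) ↔ t.lev (v a) < N := by
  letI : LE M := ⟨t.le⟩
  letI := Language.orderStructure M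
  haveI : Language.order.OrderedStructure M := ⟨fun _ => Iff.rfl⟩
  rw [smallLev, Formula.realize_not, realize_hasNPreds, ← not_le]
  exact not_congr (exists_inj_iff_le_ncard (t.preds_finite (v a)) N)
open FirstOrder FirstOrder.Language in
/-- Sentence: there are exactly `m` elements of level `< n`, realizing the order
pattern `r`. -/
noncomputable def treeSentence (n m : ℕ) (r : Fin m → Fin m → Prop) [DecidableRel r] :
    Language.order.Sentence :=
  iExsOld (Sum.inr : Fin m → Empty ⊕ Fin m)
    ((iInfOn (Finset.univ.filter fun p : Fin m × Fin m => p.1 ≠ p.2)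
        fun p => ∼(veq p.1 p.2)) ⊓
      ((iInfOn Finset.univ fun p : Fin m × Fin m =>
        if r p.1 p.2 then vle p.1 p.2 else ∼(vle p.1 p.2)) ⊓
      ((iInfOn Finset.univ fun i : Fin m => smallLev n i) ⊓
        iAllsOld (fun x => x : Fin m ⊕ Fin 1 → Fin m ⊕ Fin 1)
          (smallLev n (Sum.inr 0 : Fin m ⊕ Fin 1) ⟹
            iSupOn Finset.univ fun i : Fin m =>
              veq (Sum.inr 0 : Fin m ⊕ Fin 1) (Sum.inl i)))))

open FirstOrder FirstOrder.Language in
lemma realize_treeSentence {M : Type*} (t : TreeOrder M) (n m : ℕ)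
    (r : Fin m → Fin m → Prop) [DecidableRel r] :
    (letI : LE M := ⟨t.le⟩
     letI := Language.orderStructure M
     Sentence.Realize M (treeSentence n m r)) ↔
      ∃ x : Fin m → M, Function.Injective x ∧
        (∀ i j, t.le (x i) (x j) ↔ r i j) ∧
        (∀ i, t.lev (x i) < n) ∧
        (∀ y, t.lev y < n → ∃ i, y = x i) := by
  letI : LE M := ⟨t.le⟩
  letI := Language.orderStructure M
  haveI : Language.order.OrderedStructure M := ⟨fun _ => Iff.rfl⟩
  rw [treeSentence, Sentence.Realize, realize_iExsOld]
  refine exists_congr fun x => ?_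
  rw [show (fun a => Sum.elim (default : Empty → M) x (Sum.inr a)) = x from rfl]
  rw [Formula.realize_inf, Formula.realize_inf, Formula.realize_inf]
  simp only [Formula.Realize, realize_iInfOn]
  constructor
  · rintro ⟨h1, h2, h3, h4⟩
    refine ⟨fun i j hij => ?_, fun i j => ?_, fun i => ?_, fun y hy => ?_⟩
    · by_contra hne
      have := h1 (i, j) (by simp [hne])
      rw [BoundedFormula.realize_not] at this
      exact this ((realize_veq (M := M) i j x).2 hij)
    · have := h2 (i, j) (Finset.mem_univ _)
      by_cases hr : r i j
      · rw [if_pos hr] at this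
        exact iff_of_true ((realize_vle (M := M) i j x).1 this) hr
      · rw [if_neg hr, BoundedFormula.realize_not] at this
        exact iff_of_false (fun hc => this ((realize_vle (M := M) i j x).2 hc)) hr
    · exact (realize_smallLev_iff t n i x).1 (h3 i (Finset.mem_univ _))
    · rw [show BoundedFormula.Realize (M := M) (iAllsOld _ _) x default
          = Formula.Realize (M := M) (iAllsOld (fun x => x :
            Fin m ⊕ Fin 1 → Fin m ⊕ Fin 1) _) x from rfl, realize_iAllsOld] at h4
      have h5 := h4 (fun _ => y)
      rw [show (fun a => Sum.elim x (fun _ => y) ((fun x => x) a))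
          = Sum.elim x (fun _ => y) from rfl] at h5
      rw [Formula.realize_imp] at h5
      have h6 := h5 ((realize_smallLev_iff t n (Sum.inr 0) (Sum.elim x fun _ => y)).2 hy)
      rw [show Formula.Realize (M := M) (iSupOn _ _) (Sum.elim x fun _ => y)
          = BoundedFormula.Realize (M := M) (iSupOn Finset.univ fun i : Fin m =>
            veq (Sum.inr 0 : Fin m ⊕ Fin 1) (Sum.inl i)) (Sum.elim x fun _ => y) default
          from rfl, realize_iSupOn] at h6
      obtain ⟨i, _, hi⟩ := h6
      exact ⟨i, (realize_veq (M := M) _ _ (Sum.elim x fun _ => y)).1 hi⟩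
  · rintro ⟨hinj, hpat, hsmall, hcompl⟩
    refine ⟨fun p hp => ?_, fun p _ => ?_, fun i _ => ?_, ?_⟩
    · rw [BoundedFormula.realize_not]
      intro hc
      simp only [Finset.mem_filter] at hp
      exact hp.2 (hinj ((realize_veq (M := M) p.1 p.2 x).1 hc))
    · by_cases hr : r p.1 p.2
      · rw [if_pos hr]
        exact (realize_vle (M := M) p.1 p.2 x).2 ((hpat p.1 p.2).2 hr)
      · rw [if_neg hr, BoundedFormula.realize_not]
        exact fun hc => hr ((hpat p.1 p.2).1 ((realize_vle (M := M) p.1 p.2 x).1 hc))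
    · exact (realize_smallLev_iff t n i x).2 (hsmall i)
    · rw [show BoundedFormula.Realize (M := M) (iAllsOld _ _) x default
          = Formula.Realize (M := M) (iAllsOld (fun x => x :
            Fin m ⊕ Fin 1 → Fin m ⊕ Fin 1) _) x from rfl, realize_iAllsOld]
      intro yv
      rw [show (fun a => Sum.elim x yv ((fun x => x) a)) = Sum.elim x yv from rfl,
        Formula.realize_imp]
      intro hy
      have hy' := (realize_smallLev_iff t n (Sum.inr 0) (Sum.elim x yv)).1 hy
      obtain ⟨i, hi⟩ := hcompl (yv 0) hy'
      rw [show Formula.Realize (M := M) (iSupOn _ _) (Sum.elim x yv)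
          = BoundedFormula.Realize (M := M) (iSupOn Finset.univ fun i : Fin m =>
            veq (Sum.inr 0 : Fin m ⊕ Fin 1) (Sum.inl i)) (Sum.elim x yv) default
          from rfl, realize_iSupOn]
      exact ⟨i, Finset.mem_univ _, (realize_veq (M := M) _ _ (Sum.elim x yv)).2 hi⟩
open FirstOrder FirstOrder.Language in
lemma TreeOrder.local_of_ee {T₁ T₂ : Type*} (t1 : TreeOrder T₁) (t2 : TreeOrder T₂)
    (hf1 : t1.FiniteLevels)
    (ee : @ElementarilyEquivalent Language.order T₁ T₂
      (@Language.orderStructure T₁ ⟨t1.le⟩) (@Language.orderStructure T₂ ⟨t2.le⟩))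
    (n : ℕ) :
    ∃ f : T₁ → T₂, Set.BijOn f (t1.below n) (t2.below n) ∧
      ∀ x ∈ t1.below n, ∀ y ∈ t1.below n, (t1.le x y ↔ t2.le (f x) (f y)) := by
  classical
  have hfin := t1.below_finite hf1 n
  haveI := hfin.fintype
  set m := Fintype.card (t1.below n) with hm
  let e : ↥(t1.below n) ≃ Fin m := Fintype.equivFin _
  let r : Fin m → Fin m → Prop := fun i j => t1.le (e.symm i) (e.symm j)
  have h1 : (letI : LE T₁ := ⟨t1.le⟩
      letI := Language.orderStructure T₁
      Sentence.Realize T₁ (treeSentence n m r)) := by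
    refine (realize_treeSentence t1 n m r).mpr
      ⟨fun i => (e.symm i : T₁), ?_, fun i j => Iff.rfl, fun i => ?_, fun y hy => ?_⟩
    · exact Subtype.coe_injective.comp e.symm.injective
    · exact t1.mem_below_iff.1 (e.symm i).2
    · exact ⟨e ⟨y, t1.mem_below_iff.2 hy⟩, by simp⟩
  have h2 : (letI : LE T₂ := ⟨t2.le⟩
      letI := Language.orderStructure T₂
      Sentence.Realize T₂ (treeSentence n m r)) := by
    letI : LE T₁ := ⟨t1.le⟩
    letI : LE T₂ := ⟨t2.le⟩
    letI := Language.orderStructure T₁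
    letI := Language.orderStructure T₂
    exact (ee.realize_sentence (treeSentence n m r)).1 h1
  obtain ⟨x, hinj, hpat, hsmall, hcompl⟩ := (realize_treeSentence t2 n m r).mp h2
  let f : T₁ → T₂ := fun a => if h : a ∈ t1.below n then x (e ⟨a, h⟩) else t2.root
  have hfval : ∀ (a : T₁) (h : a ∈ t1.below n), f a = x (e ⟨a, h⟩) := fun a h => dif_pos h
  refine ⟨f, ⟨fun a ha => ?_, fun a ha b hb hab => ?_, fun z hz => ?_⟩,
    fun a ha b hb => ?_⟩
  · rw [hfval a ha]
    exact t2.mem_below_iff.2 (hsmall _)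
  · rw [hfval a ha, hfval b hb] at hab
    have := e.injective (hinj hab)
    exact congrArg Subtype.val this
  · obtain ⟨i, hi⟩ := hcompl z (t2.mem_below_iff.1 hz)
    refine ⟨(e.symm i : T₁), (e.symm i).2, ?_⟩
    rw [hfval _ (e.symm i).2, hi]
    congr
    simp
  · rw [hfval a ha, hfval b hb, hpat]
    show t1.le a b ↔ t1.le (e.symm (e ⟨a, ha⟩)) (e.symm (e ⟨b, hb⟩))
    simp
/-- Two trees with ω levels, all finite, are locally isomorphic iff they are
elementarily equivalent in the language of one binary relation. -/
theorem stmt7 {T₁ T₂ : Type*} (t1 : TreeOrder T₁) (t2 : TreeOrder T₂)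
    (h1o : t1.OmegaLevels) (h1f : t1.FiniteLevels)
    (h2o : t2.OmegaLevels) (h2f : t2.FiniteLevels) :
    (∀ n, ∃ f : T₁ → T₂, Set.BijOn f (t1.below n) (t2.below n) ∧
        ∀ x ∈ t1.below n, ∀ y ∈ t1.below n, (t1.le x y ↔ t2.le (f x) (f y))) ↔
      (letI : LE T₁ := ⟨t1.le⟩
       letI : LE T₂ := ⟨t2.le⟩
       letI := FirstOrder.Language.orderStructure T₁
       letI := FirstOrder.Language.orderStructure T₂
       FirstOrder.Language.ElementarilyEquivalent FirstOrder.Language.order T₁ T₂) := by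
  constructor
  · intro hloc
    obtain ⟨g, hbij, hiff⟩ := t1.exists_global_iso t2 h1f h2f hloc
    exact t1.ee_of_global_iso t2 g hbij hiff
  · intro ee
    exact fun n => t1.local_of_ee t2 h1f ee n
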